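/- arXiv:1205.6362 — 6 statements merged into one kernel-verified Lean document; each statement's English description precedes it below -/
import Mathlib

section
/- For all natural numbers m, n and every real (or complex, or commutative ring element) x, 1 = (1-x)^(n+1) * (∑_{k=0}^{m} C(n+k, k) x^k) + x^(m+1) * (∑_{k=0}^{n} C(m+k, k) (1-x)^k). -/
theorem chaundy_aux {R : Type*} [CommRing R] (m n : ℕ) (y : R) :
    ∑ k ∈ Finset.range (n + 1), ((m + k).choose k : R) * y ^ k
      = (1 - y) * ∑ k ∈ Finset.range (n + 1), ((m + 1 + k).choose k : R) * y ^ k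
        + y ^ (n + 1) * ((m + n + 1).choose (m + 1) : R) := by
  induction n with
  | zero => simp
  | succ n ih =>
      rw [Finset.sum_range_succ, Finset.sum_range_succ (f := fun k =>
        ((m + 1 + k).choose k : R) * y ^ k), ih]
      have h1 : (m + n + 1).choose (n + 1) = (m + n + 1).choose m := by
        rw [← Nat.choose_symm (show n + 1 ≤ m + n + 1 by omega)]; congr 1; omega
      have h2 : (m + n + 2).choose (m + 1) = (m + n + 1).choose m + (m + n + 1).choose (m + 1) := by
        have := Nat.choose_succ_succ (m + n + 1) m
        simp only [Nat.succ_eq_add_one] at this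
        rw [show m + n + 1 + 1 = m + n + 2 from by omega] at this
        omega
      have h3 : (m + 1 + (n + 1)).choose (n + 1) = (m + n + 2).choose (m + 1) := by
        rw [← Nat.choose_symm (show n + 1 ≤ m + 1 + (n + 1) by omega)]
        congr 1 <;> omega
      have h4 : (m + (n + 1)).choose (n + 1) = (m + n + 1).choose (n + 1) := rfl
      have h5 : (m + (n + 1) + 1).choose (m + 1) = (m + n + 2).choose (m + 1) := rfl
      rw [h3, h4, h5, h1]
      push_cast [h2]
      ring

theorem chaundy_bullard {R : Type*} [CommRing R] (m n : ℕ) (x : R) :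
    1 = (1 - x) ^ (n + 1) * (∑ k ∈ Finset.range (m + 1), ((n + k).choose k : R) * x ^ k)
      + x ^ (m + 1) * (∑ k ∈ Finset.range (n + 1), ((m + k).choose k : R) * (1 - x) ^ k) := by
  induction m with
  | zero =>
      simp only [Nat.zero_add, Nat.choose_self, Nat.cast_one, one_mul, Finset.sum_range_one,
        pow_zero, Nat.choose_zero_right, mul_one, pow_one]
      have h := geom_sum_mul (1 - x) (n + 1)
      linear_combination h
  | succ m ih =>
      rw [Finset.sum_range_succ]
      have h := chaundy_aux m n (1 - x)
      have hx : (n + (m + 1)).choose (m + 1) = (m + n + 1).choose (m + 1) := by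
        congr 1; omega
      rw [hx]
      linear_combination ih + x ^ (m + 1) * h
end

section
/- For all positive integers n, p and every real x with x ≠ 1, ∑_{k=0}^{n-1} C(p+k-1, k) x^k = (1-x)^(-p) - (1-x)^(-p) * x^n * ∑_{k=0}^{p-1} C(n+k-1, k) (1-x)^k. -/
open Finset

lemma cb_shift (x : ℝ) (p n : ℕ) :
    ∑ k ∈ range (n+1), (((p+1+k).choose k : ℝ)) * x ^ k
      = x * ∑ k ∈ range n, (((p+1+k).choose k : ℝ)) * x ^ k
        + ∑ k ∈ range (n+1), (((p+k).choose k : ℝ)) * x ^ k := by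
  rw [Finset.sum_range_succ' (fun k => (((p+1+k).choose k : ℝ)) * x ^ k),
      Finset.sum_range_succ' (fun k => (((p+k).choose k : ℝ)) * x ^ k), Finset.mul_sum]
  have key : ∀ k, (((p+1+(k+1)).choose (k+1) : ℝ)) * x ^ (k+1)
      = x * ((((p+1+k).choose k : ℝ)) * x ^ k) + (((p+(k+1)).choose (k+1) : ℝ)) * x ^ (k+1) := by
    intro k
    have hch : (p+1+(k+1)).choose (k+1) = (p+1+k).choose k + (p+(k+1)).choose (k+1) := by
      rw [show p+1+(k+1) = (p+k+1)+1 by ring, show p+1+k = p+k+1 by ring,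
          show p+(k+1) = p+k+1 by ring]
      simpa using Nat.choose_succ_succ (p+k+1) k
    rw [hch]
    push_cast
    ring
  simp only [key, Finset.sum_add_distrib]
  simp [Nat.choose_zero_right]
  ring

lemma cb (x : ℝ) : ∀ n p : ℕ,
    (1 : ℝ) = (1-x) ^ (p+1) * ∑ k ∈ range (n+1), (((p+k).choose k : ℝ)) * x ^ k
      + x ^ (n+1) * ∑ k ∈ range (p+1), (((n+k).choose k : ℝ)) * (1-x) ^ k := by
  intro n
  induction n with
  | zero =>
    intro p
    simp only [Nat.zero_add, Nat.choose_self, Nat.add_zero, Nat.choose_zero_right,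
      Finset.range_one, Finset.sum_singleton, Nat.cast_one, one_mul, pow_zero, mul_one]
    have h := geom_sum_mul (1-x) (p+1)
    linear_combination h
  | succ n ih =>
    intro p
    induction p with
    | zero =>
      simp only [Nat.zero_add, Nat.choose_self, Nat.add_zero, Nat.choose_zero_right,
        Finset.range_one, Finset.sum_singleton, Nat.cast_one, one_mul, pow_zero, mul_one]
      have h := geom_sum_mul x (n+1+1)
      linear_combination h
    | succ p ihp =>
      have h1 := ih (p+1)
      have h2 := ihp
      have hL1 := cb_shift x p (n+1)
      have hL2 := cb_shift (1-x) n (p+1)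
      linear_combination x * h1 + (1-x) * h2 - (1-x)^(p+2) * hL1 - x^(n+2) * hL2

theorem de_moivre_chaundy_bullard (n p : ℕ) (hn : 1 ≤ n) (hp : 1 ≤ p) (x : ℝ) (hx : x ≠ 1) :
    ∑ k ∈ Finset.range n, ((p + k - 1).choose k : ℝ) * x ^ k
      = (1 - x) ^ (-(p : ℤ))
        - (1 - x) ^ (-(p : ℤ)) * x ^ n
          * ∑ k ∈ Finset.range p, ((n + k - 1).choose k : ℝ) * (1 - x) ^ k := by
  obtain ⟨m, rfl⟩ : ∃ m, n = m + 1 := ⟨n - 1, (Nat.succ_pred_eq_of_pos hn).symm⟩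
  obtain ⟨q, rfl⟩ : ∃ q, p = q + 1 := ⟨p - 1, (Nat.succ_pred_eq_of_pos hp).symm⟩
  have hy : (1 : ℝ) - x ≠ 0 := sub_ne_zero.mpr (Ne.symm hx)
  have e1 : ∀ k, (q + 1 + k - 1) = q + k := fun k => by omega
  have e2 : ∀ k, (m + 1 + k - 1) = m + k := fun k => by omega
  simp only [e1, e2]
  have h := cb x m q
  rw [show (-((q+1 : ℕ) : ℤ)) = -((q+1 : ℤ)) by push_cast; ring]
  rw [zpow_neg, show ((q+1 : ℤ)) = ((q+1 : ℕ) : ℤ) by push_cast; ring, zpow_natCast]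
  have hq : ((1-x)^(q+1))⁻¹ * ((1-x)^(q+1)) = (1:ℝ) := inv_mul_cancel₀ (pow_ne_zero _ hy)
  linear_combination (-((1-x)^(q+1))⁻¹) * h
    - (∑ k ∈ Finset.range (m+1), ((q+k).choose k : ℝ) * x ^ k) * hq
end

section
/- For all positive integers m, n and every real p, p^n * ∑_{k=0}^{m-1} C(n+k-1, k) (1-p)^k + (1-p)^m * ∑_{k=0}^{n-1} C(m+k-1, k) p^k = 1. -/
open Finset

private lemma dm_step (m n : ℕ) (p : ℝ) :
    (1 - p) * ∑ k ∈ range (n + 1), ((m + 1 + k).choose k : ℝ) * p ^ k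
      = (∑ k ∈ range (n + 1), ((m + k).choose k : ℝ) * p ^ k)
        - ((m + n + 1).choose n : ℝ) * p ^ (n + 1) := by
  have hAB : (∑ k ∈ range (n + 1), ((m + 1 + k).choose k : ℝ) * p ^ k)
      - (∑ k ∈ range (n + 1), ((m + k).choose k : ℝ) * p ^ k)
      = ∑ j ∈ range n, ((m + 1 + j).choose j : ℝ) * p ^ (j + 1) := by
    rw [← Finset.sum_sub_distrib]
    have hterm : ∀ k ∈ range (n + 1),
        ((m + 1 + k).choose k : ℝ) * p ^ k - ((m + k).choose k : ℝ) * p ^ k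
        = (fun k => if k = 0 then (0:ℝ) else ((m + k).choose (k-1) : ℝ) * p ^ k) k := by
      intro k _
      cases k with
      | zero => simp
      | succ j =>
        simp only [Nat.succ_ne_zero, if_false]
        have hpas : (m + 1 + (j + 1)).choose (j + 1)
            = (m + (j+1)).choose j + (m + (j+1)).choose (j+1) := by
          have := Nat.choose_succ_succ (m + j + 1) j
          convert this using 3 <;> omega
        rw [hpas, Nat.add_sub_cancel]
        push_cast
        ring
    rw [Finset.sum_congr rfl hterm, Finset.sum_range_succ']
    simp only [if_true, add_zero, Nat.succ_ne_zero, if_false, Nat.add_sub_cancel]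
    apply Finset.sum_congr rfl
    intro j _
    rw [show m + (j + 1) = m + 1 + j from by omega]
  have hpA : p * ∑ k ∈ range (n + 1), ((m + 1 + k).choose k : ℝ) * p ^ k
      = (∑ j ∈ range n, ((m + 1 + j).choose j : ℝ) * p ^ (j + 1))
        + ((m + n + 1).choose n : ℝ) * p ^ (n + 1) := by
    rw [Finset.mul_sum, Finset.sum_range_succ]
    congr 1
    · apply Finset.sum_congr rfl; intro j _; ring
    · have h : m + 1 + n = m + n + 1 := by omega
      rw [h]; ring
  have hmain : (1 - p) * ∑ k ∈ range (n + 1), ((m + 1 + k).choose k : ℝ) * p ^ k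
      = (∑ k ∈ range (n + 1), ((m + 1 + k).choose k : ℝ) * p ^ k)
        - p * ∑ k ∈ range (n + 1), ((m + 1 + k).choose k : ℝ) * p ^ k := by ring
  rw [hmain, hpA]
  linarith [hAB]

private lemma dm_aux (m n : ℕ) (p : ℝ) :
    p ^ (n + 1) * ∑ k ∈ Finset.range (m + 1), ((n + k).choose k : ℝ) * (1 - p) ^ k
      + (1 - p) ^ (m + 1) * ∑ k ∈ Finset.range (n + 1), ((m + k).choose k : ℝ) * p ^ k = 1 := by
  induction m with
  | zero =>
    have hgeom := geom_sum_mul p (n + 1)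
    simp only [zero_add, Finset.sum_range_one, Nat.choose_self, Nat.choose_zero_right,
      Nat.cast_one, one_mul, pow_zero, mul_one, pow_one]
    linear_combination -hgeom
  | succ m ih =>
    rw [Finset.sum_range_succ, mul_add]
    have hpow : (1 - p) ^ (m + 1 + 1) = (1 - p) ^ (m + 1) * (1 - p) := by ring
    rw [hpow, mul_assoc, dm_step m n p]
    have hsymm : ((m + n + 1).choose n : ℝ) = ((n + (m + 1)).choose (m + 1) : ℝ) := by
      congr 1
      have h1 : n ≤ m + n + 1 := by omega
      have hs := Nat.choose_symm h1
      have h2 : m + n + 1 - n = m + 1 := by omega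
      rw [h2] at hs
      rw [← hs]
      congr 1
      omega
    rw [mul_sub, hsymm]
    linear_combination ih

theorem de_montmort_problem_of_points (m n : ℕ) (hm : 1 ≤ m) (hn : 1 ≤ n) (p : ℝ) :
    p ^ n * ∑ k ∈ Finset.range m, ((n + k - 1).choose k : ℝ) * (1 - p) ^ k
      + (1 - p) ^ m * ∑ k ∈ Finset.range n, ((m + k - 1).choose k : ℝ) * p ^ k = 1 := by
  obtain ⟨m', rfl⟩ : ∃ m', m = m' + 1 := ⟨m - 1, by omega⟩
  obtain ⟨n', rfl⟩ : ∃ n', n = n' + 1 := ⟨n - 1, by omega⟩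
  have h1 : ∀ k, (n' + 1 + k - 1).choose k = (n' + k).choose k := by
    intro k; congr 1; omega
  have h2 : ∀ k, (m' + 1 + k - 1).choose k = (m' + k).choose k := by
    intro k; congr 1; omega
  simp only [h1, h2]
  exact dm_aux m' n' p
end

section
/- For all positive integers m, n and every real p, ∑_{k=0}^{m-1} C(m+n-1, k) p^(m+n-k-1) (1-p)^k = p^n * ∑_{k=0}^{m-1} C(n+k-1, k) (1-p)^k. -/
lemma nb_key (N m : ℕ) (hm : m ≤ N) (p : ℝ) :
    ∑ k ∈ Finset.range (m+1), ((N+1).choose k : ℝ) * p ^ (N+1-k) * (1-p)^k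
      = (∑ k ∈ Finset.range m, (N.choose k : ℝ) * p ^ (N-k) * (1-p)^k)
        + (N.choose m : ℝ) * p^(N-m+1) * (1-p)^m := by
  have h2 : ∑ k ∈ Finset.range m, (N.choose (k+1):ℝ) * p^(N-k) * (1-p)^(k+1) + p^(N+1)
      = ∑ k ∈ Finset.range m, (N.choose k:ℝ) * (p * p^(N-k)) * (1-p)^k
        + (N.choose m : ℝ) * p^(N-m+1) * (1-p)^m := by
    have w1 : ∑ k ∈ Finset.range (m+1), (N.choose k:ℝ) * p^(N+1-k) * (1-p)^k
        = ∑ k ∈ Finset.range m, (N.choose (k+1):ℝ) * p^(N-k) * (1-p)^(k+1) + p^(N+1) := by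
      rw [Finset.sum_range_succ']
      simp only [Nat.choose_zero_right, pow_zero, Nat.cast_one, one_mul, mul_one,
        Nat.sub_zero]
      congr 1
      refine Finset.sum_congr rfl fun k hk => ?_
      have e : N + 1 - (k+1) = N - k := by omega
      rw [e]
    have w2 : ∑ k ∈ Finset.range (m+1), (N.choose k:ℝ) * p^(N+1-k) * (1-p)^k
        = ∑ k ∈ Finset.range m, (N.choose k:ℝ) * (p * p^(N-k)) * (1-p)^k
          + (N.choose m : ℝ) * p^(N-m+1) * (1-p)^m := by
      rw [Finset.sum_range_succ]
      congr 1
      · refine Finset.sum_congr rfl fun k hk => ?_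
        have hk' : k < m := Finset.mem_range.mp hk
        have e : N + 1 - k = (N - k) + 1 := by omega
        rw [e, pow_succ]
        ring
      · have e : N + 1 - m = N - m + 1 := by omega
        rw [e]
    rw [← w1, w2]
  rw [Finset.sum_range_succ']
  have w3 : ∀ k ∈ Finset.range m, ((N+1).choose (k+1):ℝ) * p^(N+1-(k+1)) * (1-p)^(k+1)
      = (N.choose k:ℝ) * p^(N-k) * (1-p)^(k+1)
        + (N.choose (k+1):ℝ) * p^(N-k) * (1-p)^(k+1) := by
    intro k hk
    have e : N + 1 - (k+1) = N - k := by omega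
    rw [e, Nat.choose_succ_succ]
    push_cast
    ring
  rw [Finset.sum_congr rfl w3, Finset.sum_add_distrib]
  simp only [Nat.choose_zero_right, pow_zero, Nat.cast_one, one_mul, mul_one, Nat.sub_zero]
  rw [add_assoc, h2, ← add_assoc, ← Finset.sum_add_distrib]
  congr 1
  refine Finset.sum_congr rfl fun k hk => ?_
  rw [pow_succ]
  ring

lemma nb_step (m n : ℕ) (hm : 1 ≤ m) (hn : 1 ≤ n) (p : ℝ) :
    ∑ k ∈ Finset.range (m+1), ((m + 1 + n - 1).choose k : ℝ) * p ^ (m + 1 + n - k - 1) * (1 - p) ^ k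
      = (∑ k ∈ Finset.range m, ((m + n - 1).choose k : ℝ) * p ^ (m + n - k - 1) * (1 - p) ^ k)
        + ((m + n - 1).choose m : ℝ) * p ^ n * (1 - p) ^ m := by
  have h := nb_key (m+n-1) m (by omega) p
  have eL : ∑ k ∈ Finset.range (m+1), ((m + 1 + n - 1).choose k : ℝ) * p ^ (m + 1 + n - k - 1) * (1 - p) ^ k
      = ∑ k ∈ Finset.range (m+1), ((m+n-1+1).choose k : ℝ) * p ^ (m+n-1+1-k) * (1-p)^k := by
    refine Finset.sum_congr rfl fun k hk => ?_
    have hk' : k < m + 1 := Finset.mem_range.mp hk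
    have e1 : m + 1 + n - 1 = m + n - 1 + 1 := by omega
    have e2 : m + 1 + n - k - 1 = m + n - 1 + 1 - k := by omega
    rw [e1, e2]
  have eR : ∑ k ∈ Finset.range m, ((m + n - 1).choose k : ℝ) * p ^ (m + n - k - 1) * (1 - p) ^ k
      = ∑ k ∈ Finset.range m, ((m+n-1).choose k : ℝ) * p ^ (m+n-1-k) * (1-p)^k := by
    refine Finset.sum_congr rfl fun k hk => ?_
    have e : m + n - k - 1 = m + n - 1 - k := by omega
    rw [e]
  have en : m + n - 1 - m + 1 = n := by omega
  rw [eL, h, en, ← eR]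

theorem negative_binomial_eq_binomial (m n : ℕ) (hm : 1 ≤ m) (hn : 1 ≤ n) (p : ℝ) :
    ∑ k ∈ Finset.range m, ((m + n - 1).choose k : ℝ) * p ^ (m + n - k - 1) * (1 - p) ^ k
      = p ^ n * ∑ k ∈ Finset.range m, ((n + k - 1).choose k : ℝ) * (1 - p) ^ k := by
  induction m, hm using Nat.le_induction with
  | base =>
      simp only [Finset.sum_range_one, Nat.choose_zero_right, Nat.cast_one, one_mul,
        pow_zero, mul_one, Nat.sub_zero]
      rw [show 1 + n - 1 = n from by omega]
  | succ m hm ih =>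
      rw [nb_step m n hm hn p, ih, Finset.sum_range_succ,
        show m + n - 1 = n + m - 1 from by omega]
      ring
end

section
/- For all positive integers m, n and every real x with |x - 1| > 1, the partial sum ∑_{k=0}^{n-1} (m)_k / k! * x^k equals ((m)_{n-1}/(n-1)!) * x^n/(x-1) times the sum of the two series ∑_{k=0}^{m-1} (-m+1)_k/(-m-n+2)_k * (1-x)^(-k) + ∑_{k=m+n-1}^{∞} (-m-n+k+2)_{n-1}/(-m-n+2)_{n-1} * (1-x)^(-k), where (a)_k denotes the rising factorial. -/
/-- The Pochhammer symbol (rising factorial) `(a)_k = a(a+1)⋯(a+k-1)` for real `a`. -/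
def risingFactorial (a : ℝ) (k : ℕ) : ℝ := ∏ i ∈ Finset.range k, (a + i)

lemma rf_succ (a : ℝ) (k : ℕ) : risingFactorial a (k+1) = risingFactorial a k * (a + k) :=
  Finset.prod_range_succ _ _

lemma rf_nat_mul (M k : ℕ) :
    risingFactorial ((M:ℝ)+1) k * (M.factorial : ℝ) = ((M+k).factorial : ℝ) := by
  induction k with
  | zero => simp [risingFactorial]
  | succ k ih =>
    rw [rf_succ, mul_right_comm, ih, show M + (k+1) = (M+k)+1 from rfl, Nat.factorial_succ]
    push_cast
    ring

lemma rf_neg (a : ℕ) : ∀ k : ℕ, k ≤ a →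
    risingFactorial (-(a:ℝ)) k = (-1)^k * ((a.factorial : ℝ) / ((a-k).factorial : ℝ)) := by
  intro k
  induction k with
  | zero =>
    intro _
    simp [risingFactorial, div_self (Nat.cast_ne_zero.2 (Nat.factorial_ne_zero a) : (a.factorial:ℝ) ≠ 0)]
  | succ k ih =>
    intro h
    have hk : k ≤ a := by omega
    have hc : -(a:ℝ) + k = -(((a-k : ℕ)):ℝ) := by
      push_cast [Nat.cast_sub hk]
      ring
    have hf : ((a-k).factorial : ℝ) = ((a-k : ℕ) : ℝ) * ((a-(k+1)).factorial : ℝ) := by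
      rw [show a - k = (a - (k+1)) + 1 from by omega, Nat.factorial_succ]
      push_cast [Nat.cast_sub h, Nat.cast_sub hk]
      ring
    have h0 : ((a-(k+1)).factorial : ℝ) ≠ 0 := Nat.cast_ne_zero.2 (Nat.factorial_ne_zero _)
    have h1 : ((a-k).factorial : ℝ) ≠ 0 := Nat.cast_ne_zero.2 (Nat.factorial_ne_zero _)
    have hne : ((a - k : ℕ) : ℝ) ≠ 0 := Nat.cast_ne_zero.2 (by omega)
    have hAB : ((a.factorial : ℝ) / ((a-k).factorial : ℝ)) * ((a-k : ℕ) : ℝ)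
        = (a.factorial : ℝ) / ((a-(k+1)).factorial : ℝ) := by
      rw [hf, div_mul_eq_mul_div, mul_comm ((a-k:ℕ):ℝ) ((a-(k+1)).factorial:ℝ),
        mul_div_mul_right _ _ hne]
    rw [rf_succ, ih hk, hc, pow_succ]
    linear_combination (-(-1:ℝ)^k) * hAB

lemma rf_div_factorial (M k : ℕ) :
    risingFactorial ((M:ℝ)+1) k / (k.factorial : ℝ) = (((M+k).choose k : ℕ) : ℝ) := by
  have h1 := rf_nat_mul M k
  have h2 : ((M+k).choose k) * k.factorial * M.factorial = (M+k).factorial := by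
    have := Nat.choose_mul_factorial_mul_factorial (Nat.le_add_left k M)
    simpa using this
  have h2' : (((M+k).choose k : ℕ) : ℝ) * (k.factorial : ℝ) * (M.factorial : ℝ)
      = ((M+k).factorial : ℝ) := by exact_mod_cast congrArg (Nat.cast (R := ℝ)) h2
  have hk : (k.factorial : ℝ) ≠ 0 := Nat.cast_ne_zero.2 (Nat.factorial_ne_zero _)
  have hM : (M.factorial : ℝ) ≠ 0 := Nat.cast_ne_zero.2 (Nat.factorial_ne_zero _)
  rw [div_eq_iff hk]
  apply mul_right_cancel₀ hM
  rw [mul_right_comm, h1]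
  linear_combination -h2'

noncomputable def cbF (A b : ℕ) (z : ℝ) : ℝ := ∑ k ∈ Finset.range b, (((A + k).choose k : ℕ) : ℝ) * z ^ k

lemma cbF_rec (A N : ℕ) (x : ℝ) :
    cbF (A+1) (N+1) x = x * cbF (A+1) N x + cbF A (N+1) x := by
  induction N with
  | zero => simp [cbF]
  | succ N ih =>
    have eL : cbF (A+1) (N+1+1) x
        = cbF (A+1) (N+1) x + (((A+1+(N+1)).choose (N+1) : ℕ) : ℝ) * x^(N+1) :=
      Finset.sum_range_succ _ _
    have eA : cbF A (N+1+1) x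
        = cbF A (N+1) x + (((A+(N+1)).choose (N+1) : ℕ) : ℝ) * x^(N+1) :=
      Finset.sum_range_succ _ _
    have eR : cbF (A+1) (N+1) x
        = cbF (A+1) N x + (((A+1+N).choose N : ℕ) : ℝ) * x^N :=
      Finset.sum_range_succ _ _
    have hp : (((A+1+(N+1)).choose (N+1) : ℕ) : ℝ)
        = (((A+(N+1)).choose (N+1) : ℕ) : ℝ) + (((A+1+N).choose N : ℕ) : ℝ) := by
      have : (A + 1 + (N+1)).choose (N+1) = (A+(N+1)).choose (N+1) + (A+1+N).choose N := by
        rw [show A + 1 + (N+1) = (A + 1 + N) + 1 from rfl, Nat.choose_succ_succ,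
          show A + 1 + N = A + (N+1) from by omega]
        simp only [Nat.succ_eq_add_one]
        omega
      exact_mod_cast congrArg (Nat.cast (R := ℝ)) this
    rw [eL, eA]
    linear_combination ih - x * eR + x^(N+1) * hp

lemma CB (M : ℕ) : ∀ (N : ℕ) (x : ℝ),
    (1-x)^(M+1) * cbF M (N+1) x + x^(N+1) * cbF N (M+1) (1-x) = 1 := by
  induction M with
  | zero =>
    intro N x
    have hg := geom_sum_mul x (N+1)
    have h1 : cbF 0 (N+1) x = ∑ k ∈ Finset.range (N+1), x ^ k := by
      simp [cbF]
    have h2 : cbF N 1 (1-x) = 1 := by simp [cbF]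
    rw [h1, h2, pow_one]
    linear_combination -hg
  | succ M ihM =>
    intro N x
    induction N with
    | zero =>
      have hg := geom_sum_mul (1-x) (M+2)
      have h1 : cbF 0 (M+2) (1-x) = ∑ k ∈ Finset.range (M+2), (1-x) ^ k := by
        simp [cbF]
      have h2 : cbF (M+1) 1 x = 1 := by simp [cbF]
      rw [h1, h2, pow_one]
      linear_combination -hg
    | succ N ihN =>
      have h1 := cbF_rec M (N+1) x
      have h2 := cbF_rec N (M+1) (1-x)
      have e1 := ihM (N+1) x
      have e2 := ihN
      linear_combination (1-x)^(M+2) * h1 + x^(N+2) * h2 + x * e2 + (1-x) * e1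


theorem hering_intermediate_identity (m n : ℕ) (hm : 1 ≤ m) (hn : 1 ≤ n) (x : ℝ)
    (hx : 1 < |x - 1|) :
    ∑ k ∈ Finset.range n, risingFactorial m k / (k.factorial : ℝ) * x ^ k
      = risingFactorial m (n - 1) / ((n - 1).factorial : ℝ) * (x ^ n / (x - 1))
        * ((∑ k ∈ Finset.range m,
              risingFactorial (-(m : ℝ) + 1) k / risingFactorial (-(m : ℝ) - n + 2) k
                * (1 - x) ^ (-(k : ℤ)))
          + ∑' j : ℕ,
              risingFactorial (-(m : ℝ) - n + ((m + n - 1 + j : ℕ) : ℝ) + 2) (n - 1)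
                / risingFactorial (-(m : ℝ) - n + 2) (n - 1)
                * (1 - x) ^ (-((m + n - 1 + j : ℕ) : ℤ))) := by
  obtain ⟨M, rfl⟩ : ∃ M, m = M + 1 := ⟨m - 1, by omega⟩
  obtain ⟨N, rfl⟩ : ∃ N, n = N + 1 := ⟨n - 1, by omega⟩
  simp only [Nat.add_sub_cancel]
  have hy1 : 1 < |1 - x| := by rwa [show (1 - x) = -(x-1) by ring, abs_neg]
  have hy0 : (1:ℝ) - x ≠ 0 := by
    intro h
    rw [h, abs_zero] at hy1
    linarith
  have hx0 : x ≠ 0 := by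
    rintro rfl
    rw [sub_zero, abs_one] at hy1
    linarith
  have hx1 : x - 1 ≠ 0 := by
    intro h
    apply hy0
    linarith
  set t : ℝ := (1 - x)⁻¹ with ht_def
  have ht0 : t ≠ 0 := inv_ne_zero hy0
  have hty : t * (1 - x) = 1 := inv_mul_cancel₀ hy0
  have htn : ‖t‖ < 1 := by
    rw [ht_def, norm_inv, Real.norm_eq_abs]
    exact inv_lt_one_of_one_lt₀ hy1
  have h1t : 1 - t = -x * t := by
    rw [ht_def]
    field_simp
    ring
  -- LHS
  have hLHS : ∑ k ∈ Finset.range (N + 1), risingFactorial (↑(M + 1)) k / (k.factorial : ℝ) * x ^ k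
      = cbF M (N+1) x := by
    apply Finset.sum_congr rfl
    intro k _
    rw [show ((M+1 : ℕ):ℝ) = (M:ℝ)+1 by push_cast; ring, rf_div_factorial]
  -- leading coefficient
  have hC : risingFactorial (↑(M + 1)) N / (N.factorial : ℝ) = (((M+N).choose N : ℕ) : ℝ) := by
    rw [show ((M+1 : ℕ):ℝ) = (M:ℝ)+1 by push_cast; ring, rf_div_factorial]
  -- the B series
  have hB : (∑' (j : ℕ),
        risingFactorial (-(↑(M + 1) : ℝ) - ↑(N + 1) + ↑(M + 1 + (N + 1) - 1 + j) + 2) N /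
            risingFactorial (-(↑(M + 1) : ℝ) - ↑(N + 1) + 2) N
          * (1 - x) ^ (-(↑(M + 1 + (N + 1) - 1 + j) : ℤ)))
      = ((N.factorial : ℝ) * (M.factorial : ℝ) / ((-1)^N * ((M+N).factorial : ℝ))) * t^(M+N+1)
          * (1 / (1-t)^(N+1)) := by
    have hD : risingFactorial (-(↑(M + 1) : ℝ) - ↑(N + 1) + 2) N
        = (-1)^N * (((M+N).factorial : ℝ) / (M.factorial : ℝ)) := by
      rw [show -(↑(M + 1) : ℝ) - ↑(N + 1) + 2 = -(((M+N : ℕ)) : ℝ) by push_cast; ring,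
        rf_neg (M+N) N (by omega)]
      simp only [Nat.add_sub_cancel]
    have hNf : (N.factorial : ℝ) ≠ 0 := Nat.cast_ne_zero.2 (Nat.factorial_ne_zero _)
    have hterm : ∀ j : ℕ,
        risingFactorial (-(↑(M + 1) : ℝ) - ↑(N + 1) + ↑(M + 1 + (N + 1) - 1 + j) + 2) N /
            risingFactorial (-(↑(M + 1) : ℝ) - ↑(N + 1) + 2) N
          * (1 - x) ^ (-(↑(M + 1 + (N + 1) - 1 + j) : ℤ))
        = ((N.factorial : ℝ) * (M.factorial : ℝ) / ((-1)^N * ((M+N).factorial : ℝ))) * t^(M+N+1)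
            * ((((j+N).choose N : ℕ) : ℝ) * t^j) := by
      intro j
      rw [show M + 1 + (N + 1) - 1 + j = M+N+1+j from by omega]
      rw [show -(↑(M + 1) : ℝ) - ↑(N + 1) + ↑((M+N+1+j : ℕ)) + 2 = ((j:ℝ)+1) by push_cast; ring]
      have hnum : risingFactorial ((j:ℝ)+1) N = (((j+N).choose N : ℕ) : ℝ) * (N.factorial : ℝ) := by
        rw [← rf_div_factorial j N, div_mul_cancel₀ _ hNf]
      rw [hnum, hD, zpow_neg, zpow_natCast, ← inv_pow, ← ht_def, pow_add (a := t) (m := M+N+1)]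
      rw [div_eq_mul_inv, div_eq_mul_inv, mul_inv, mul_inv, inv_inv]
      ring
    rw [tsum_congr hterm]
    exact (((hasSum_choose_mul_geometric_of_norm_lt_one N htn).mul_left _).tsum_eq)
  have hkey : ∀ k ∈ Finset.range (M+1),
      risingFactorial (-(↑(M + 1) : ℝ) + 1) k / risingFactorial (-(↑(M + 1) : ℝ) - ↑(N + 1) + 2) k
          * (1 - x) ^ (-(k : ℤ))
        = (((M+N-k).choose N : ℕ) : ℝ) * t^k / (((M+N).choose N : ℕ) : ℝ) := by
    intro k hk
    rw [Finset.mem_range] at hk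
    have hkM : k ≤ M := by omega
    rw [show -(↑(M + 1) : ℝ) + 1 = -(M:ℝ) by push_cast; ring,
      show -(↑(M + 1) : ℝ) - ↑(N + 1) + 2 = -(((M+N : ℕ)) : ℝ) by push_cast; ring,
      rf_neg M k hkM, rf_neg (M+N) k (hkM.trans (by omega)),
      zpow_neg, zpow_natCast, ← inv_pow, ← ht_def]
    have f1 : (((M+N-k).choose N : ℕ) : ℝ) * (N.factorial : ℝ) * ((M-k).factorial : ℝ)
        = ((M+N-k).factorial : ℝ) := by
      have h := Nat.choose_mul_factorial_mul_factorial (show N ≤ M+N-k by omega)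
      rw [show M+N-k-N = M-k from by omega] at h
      exact_mod_cast congrArg (Nat.cast (R := ℝ)) h
    have f2 : (((M+N).choose N : ℕ) : ℝ) * (N.factorial : ℝ) * (M.factorial : ℝ)
        = ((M+N).factorial : ℝ) := by
      have h := Nat.choose_mul_factorial_mul_factorial (show N ≤ M+N by omega)
      rw [show M+N-N = M from by omega] at h
      exact_mod_cast congrArg (Nat.cast (R := ℝ)) h
    have n1 : ((M-k).factorial : ℝ) ≠ 0 := Nat.cast_ne_zero.2 (Nat.factorial_ne_zero _)
    have n2 : ((M+N-k).factorial : ℝ) ≠ 0 := Nat.cast_ne_zero.2 (Nat.factorial_ne_zero _)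
    have n3 : ((M+N).factorial : ℝ) ≠ 0 := Nat.cast_ne_zero.2 (Nat.factorial_ne_zero _)
    have n4 : (M.factorial : ℝ) ≠ 0 := Nat.cast_ne_zero.2 (Nat.factorial_ne_zero _)
    have n5 : (N.factorial : ℝ) ≠ 0 := Nat.cast_ne_zero.2 (Nat.factorial_ne_zero _)
    have n6 : (((M+N).choose N : ℕ) : ℝ) ≠ 0 :=
      Nat.cast_ne_zero.2 (Nat.choose_pos (by omega)).ne'
    have n7 : ((-1 : ℝ))^k ≠ 0 := pow_ne_zero _ (by norm_num)
    have h12 : (((M+N-k).choose N : ℕ) : ℝ) * ((M-k).factorial : ℝ) * ((M+N).factorial : ℝ)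
        = (((M+N).choose N : ℕ) : ℝ) * (M.factorial : ℝ) * ((M+N-k).factorial : ℝ) := by
      apply mul_left_cancel₀ n5
      linear_combination ((M+N).factorial : ℝ) * f1 - ((M+N-k).factorial : ℝ) * f2
    field_simp
    linear_combination (-1:ℝ) * h12
  have hA : (∑ k ∈ Finset.range (M + 1),
        risingFactorial (-(↑(M + 1) : ℝ) + 1) k / risingFactorial (-(↑(M + 1) : ℝ) - ↑(N + 1) + 2) k
          * (1 - x) ^ (-(k : ℤ)))
      = t^M * cbF N (M+1) (1-x) / (((M+N).choose N : ℕ) : ℝ) := by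
    rw [Finset.sum_congr rfl hkey, ← Finset.sum_div]
    congr 1
    rw [← Finset.sum_range_reflect, cbF, Finset.mul_sum]
    apply Finset.sum_congr rfl
    intro j hj
    rw [Finset.mem_range] at hj
    have hjM : j ≤ M := by omega
    have hcs : (N+j).choose N = (N+j).choose j := by
      rw [← Nat.choose_symm (show j ≤ N+j by omega)]
      congr 1
      omega
    have hpow : (t : ℝ)^(M-j) = t^M * (1-x)^j := by
      have h' : (t : ℝ)^M = t^(M-j) * t^j := by
        rw [← pow_add]
        congr 1
        omega
      rw [h', mul_assoc, ← mul_pow, hty, one_pow, mul_one]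
    rw [show M+1-1-j = M-j from rfl, show M+N-(M-j) = N+j from by omega, hcs, hpow]
    ring
  rw [hLHS, hC, hA, hB, h1t]
  have hCB := CB M N x
  have f2' : (((M+N).choose N : ℕ) : ℝ) * (N.factorial : ℝ) * (M.factorial : ℝ)
      = ((M+N).factorial : ℝ) := by
    have h := Nat.choose_mul_factorial_mul_factorial (show N ≤ M+N by omega)
    rw [show M+N-N = M from by omega] at h
    exact_mod_cast congrArg (Nat.cast (R := ℝ)) h
  have n3 : ((M+N).factorial : ℝ) ≠ 0 := Nat.cast_ne_zero.2 (Nat.factorial_ne_zero _)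
  have n4 : (M.factorial : ℝ) ≠ 0 := Nat.cast_ne_zero.2 (Nat.factorial_ne_zero _)
  have n5 : (N.factorial : ℝ) ≠ 0 := Nat.cast_ne_zero.2 (Nat.factorial_ne_zero _)
  have n6 : (((M+N).choose N : ℕ) : ℝ) ≠ 0 := Nat.cast_ne_zero.2 (Nat.choose_pos (by omega)).ne'
  have htyM : t^M * (1-x)^M = 1 := by rw [← mul_pow, hty, one_pow]
  have hsg : (-1 : ℝ)^N * (-1 : ℝ)^N = 1 := by
    rw [← pow_add, ← two_mul, pow_mul]
    norm_num
  field_simp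
  have hP : (-(x*t))^(N+1) = -((-1 : ℝ)^N * x^(N+1) * t^(N+1)) := by
    rw [neg_pow, mul_pow, pow_succ]
    ring
  rw [hP]
  linear_combination
    (x^(N+1)*t^(N+1)*(-(cbF M (N+1) x)*(x-1)*((M+N).factorial : ℝ)
        + x^(N+1)*t^M*cbF N (M+1) (1-x)*((M+N).factorial : ℝ))) * hsg
      - (x^(N+1)*t^(M+N+1)) * f2'
      + (x^(N+1)*t^(N+1)*((M+N).factorial : ℝ)*t^M) * hCB
      - (x^(N+1)*t^(N+1)*((M+N).factorial : ℝ)*(1-x)*cbF M (N+1) x) * htyM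
end

section
/- For all positive integers m, n and every real p with 0 ≤ p ≤ 1, the quantity p * ∑_{k=0}^{m-1} C(n+k-1, k) p^(n-1) (1-p)^k lies in [0,1], and together with (1-p) * ∑_{k=0}^{n-1} C(m+k-1, k) p^k (1-p)^(m-1) sums to 1. -/
open Finset

lemma aux_base (n : ℕ) (hn : 1 ≤ n) (p : ℝ) :
    ∑ k ∈ range n, ((k - 1).choose k : ℝ) * p ^ k = 1 := by
  rw [Finset.sum_eq_single 0]
  · simp
  · intro k _ hk
    have : (k - 1).choose k = 0 := Nat.choose_eq_zero_of_lt (by omega)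
    simp [this]
  · intro h
    exact absurd (Finset.mem_range.mpr (by omega)) h

lemma aux1 (m' n' : ℕ) (p : ℝ) :
    p ^ (n' + 1) * ((n' + m' + 1).choose (m' + 1) : ℝ)
      + (1 - p) * ∑ k ∈ range (n' + 1), ((m' + 1 + k).choose k : ℝ) * p ^ k
    = ∑ k ∈ range (n' + 1), ((m' + k).choose k : ℝ) * p ^ k := by
  induction n' with
  | zero => simp
  | succ n ih =>
    rw [Finset.sum_range_succ (f := fun k => ((m' + 1 + k).choose k : ℝ) * p ^ k),
        Finset.sum_range_succ (f := fun k => ((m' + k).choose k : ℝ) * p ^ k)]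
    have e3 : ((n + m' + 1).choose (m' + 1) : ℝ) = ((m' + n + 1).choose n : ℝ) := by
      rw [show n + m' + 1 = m' + 1 + n from by omega, Nat.choose_symm_add,
        show m' + 1 + n = m' + n + 1 from by omega]
    have e1 : ((n + 1 + m' + 1).choose (m' + 1) : ℝ)
        = ((m' + n + 1).choose n : ℝ) + ((m' + n + 1).choose (n + 1) : ℝ) := by
      rw [show n + 1 + m' + 1 = m' + 1 + (n + 1) from by omega, Nat.choose_symm_add,
        show m' + 1 + (n + 1) = (m' + n + 1) + 1 from by omega, Nat.choose_succ_succ]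
      push_cast
      try ring
    have e2 : ((m' + 1 + (n + 1)).choose (n + 1) : ℝ)
        = ((m' + n + 1).choose n : ℝ) + ((m' + n + 1).choose (n + 1) : ℝ) := by
      rw [show m' + 1 + (n + 1) = (m' + n + 1) + 1 from by omega, Nat.choose_succ_succ]
      push_cast
      try ring
    have e4 : ((m' + (n + 1)).choose (n + 1) : ℝ) = ((m' + n + 1).choose (n + 1) : ℝ) := by
      rw [show m' + (n + 1) = m' + n + 1 from by omega]
    rw [e3] at ih
    rw [e1, e2, e4]
    linear_combination ih

lemma aux_star (m n : ℕ) (hn : 1 ≤ n) (p : ℝ) :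
    p ^ n * ((n + m - 1).choose m : ℝ)
      + (1 - p) * ∑ k ∈ range n, ((m + k).choose k : ℝ) * p ^ k
    = ∑ k ∈ range n, ((m + k - 1).choose k : ℝ) * p ^ k := by
  obtain ⟨n', rfl⟩ : ∃ n', n = n' + 1 := ⟨n - 1, by omega⟩
  cases m with
  | zero =>
    simp only [Nat.zero_add, Nat.choose_self]
    rw [show n' + 1 + 0 - 1 = n' from by omega, Nat.choose_zero_right]
    rw [aux_base (n' + 1) (by omega) p]
    have hg := geom_sum_mul p (n' + 1)
    simp only [Nat.cast_one, one_mul]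
    nlinarith [hg]
  | succ m' =>
    have h := aux1 m' n' p
    rw [show n' + 1 + (m' + 1) - 1 = n' + m' + 1 from by omega]
    have hs1 : ∑ k ∈ range (n' + 1), ((m' + 1 + k).choose k : ℝ) * p ^ k
        = ∑ k ∈ range (n' + 1), ((m' + 1 + k).choose k : ℝ) * p ^ k := rfl
    calc p ^ (n' + 1) * ((n' + m' + 1).choose (m' + 1) : ℝ)
        + (1 - p) * ∑ k ∈ range (n' + 1), ((m' + 1 + k).choose k : ℝ) * p ^ k
        = ∑ k ∈ range (n' + 1), ((m' + k).choose k : ℝ) * p ^ k := h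
      _ = ∑ k ∈ range (n' + 1), ((m' + 1 + k - 1).choose k : ℝ) * p ^ k := by
          refine Finset.sum_congr rfl fun k _ => ?_
          rw [show m' + 1 + k - 1 = m' + k from by omega]

lemma key (m n : ℕ) (hn : 1 ≤ n) (p : ℝ) :
    p ^ n * ∑ k ∈ range m, ((n + k - 1).choose k : ℝ) * (1 - p) ^ k
      + (1 - p) ^ m * ∑ k ∈ range n, ((m + k - 1).choose k : ℝ) * p ^ k = 1 := by
  induction m with
  | zero =>
    simp only [Finset.range_zero, Finset.sum_empty, mul_zero, zero_add, pow_zero, one_mul]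
    simpa using aux_base n hn p
  | succ m ih =>
    rw [Finset.sum_range_succ]
    have hstar := aux_star m n hn p
    have hrw : ∑ k ∈ range n, ((m + 1 + k - 1).choose k : ℝ) * p ^ k
        = ∑ k ∈ range n, ((m + k).choose k : ℝ) * p ^ k := by
      refine Finset.sum_congr rfl fun k _ => ?_
      rw [show m + 1 + k - 1 = m + k from by omega]
    rw [hrw]
    calc p ^ n * (∑ k ∈ range m, ((n + k - 1).choose k : ℝ) * (1 - p) ^ k
            + ((n + m - 1).choose m : ℝ) * (1 - p) ^ m)
          + (1 - p) ^ (m + 1) * ∑ k ∈ range n, ((m + k).choose k : ℝ) * p ^ k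
        = p ^ n * ∑ k ∈ range m, ((n + k - 1).choose k : ℝ) * (1 - p) ^ k
          + (1 - p) ^ m * (p ^ n * ((n + m - 1).choose m : ℝ)
            + (1 - p) * ∑ k ∈ range n, ((m + k).choose k : ℝ) * p ^ k) := by ring
      _ = 1 := by rw [hstar]; exact ih

theorem de_montmort_probabilities (m n : ℕ) (hm : 1 ≤ m) (hn : 1 ≤ n) (p : ℝ)
    (hp0 : 0 ≤ p) (hp1 : p ≤ 1) :
    (p * ∑ k ∈ Finset.range m, ((n + k - 1).choose k : ℝ) * p ^ (n - 1) * (1 - p) ^ k)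
        ∈ Set.Icc (0 : ℝ) 1
      ∧ (p * ∑ k ∈ Finset.range m, ((n + k - 1).choose k : ℝ) * p ^ (n - 1) * (1 - p) ^ k)
          + (1 - p) * ∑ k ∈ Finset.range n,
              ((m + k - 1).choose k : ℝ) * p ^ k * (1 - p) ^ (m - 1) = 1 := by
  have hq0 : (0 : ℝ) ≤ 1 - p := by linarith
  have hpn : p * p ^ (n - 1) = p ^ n := by
    rw [← pow_succ']
    congr 1
    omega
  have hqm : (1 - p) * (1 - p) ^ (m - 1) = (1 - p) ^ m := by
    rw [← pow_succ']
    congr 1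
    omega
  have hx : p * ∑ k ∈ Finset.range m, ((n + k - 1).choose k : ℝ) * p ^ (n - 1) * (1 - p) ^ k
      = p ^ n * ∑ k ∈ range m, ((n + k - 1).choose k : ℝ) * (1 - p) ^ k := by
    rw [Finset.mul_sum, Finset.mul_sum]
    refine Finset.sum_congr rfl fun k _ => ?_
    calc p * (((n + k - 1).choose k : ℝ) * p ^ (n - 1) * (1 - p) ^ k)
        = (p * p ^ (n - 1)) * (((n + k - 1).choose k : ℝ) * (1 - p) ^ k) := by ring
      _ = p ^ n * (((n + k - 1).choose k : ℝ) * (1 - p) ^ k) := by rw [hpn]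
  have hy : (1 - p) * ∑ k ∈ Finset.range n, ((m + k - 1).choose k : ℝ) * p ^ k * (1 - p) ^ (m - 1)
      = (1 - p) ^ m * ∑ k ∈ range n, ((m + k - 1).choose k : ℝ) * p ^ k := by
    rw [Finset.mul_sum, Finset.mul_sum]
    refine Finset.sum_congr rfl fun k _ => ?_
    calc (1 - p) * (((m + k - 1).choose k : ℝ) * p ^ k * (1 - p) ^ (m - 1))
        = ((1 - p) * (1 - p) ^ (m - 1)) * (((m + k - 1).choose k : ℝ) * p ^ k) := by ring
      _ = (1 - p) ^ m * (((m + k - 1).choose k : ℝ) * p ^ k) := by rw [hqm]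
  have hkey := key m n hn p
  have hXnn : 0 ≤ p ^ n * ∑ k ∈ range m, ((n + k - 1).choose k : ℝ) * (1 - p) ^ k := by
    apply mul_nonneg (pow_nonneg hp0 n)
    exact Finset.sum_nonneg fun k _ => mul_nonneg (Nat.cast_nonneg _) (pow_nonneg hq0 k)
  have hYnn : 0 ≤ (1 - p) ^ m * ∑ k ∈ range n, ((m + k - 1).choose k : ℝ) * p ^ k := by
    apply mul_nonneg (pow_nonneg hq0 m)
    exact Finset.sum_nonneg fun k _ => mul_nonneg (Nat.cast_nonneg _) (pow_nonneg hp0 k)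
  rw [hx, hy]
  exact ⟨⟨hXnn, by linarith⟩, by linarith [hkey]⟩
end
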